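/- With the iterative scheme 1/s_i' = p/s_{i-1}'' - 2/N + η and 1/s_i'' = q/s_{i-1}' - 2/N + η for i ≥ 2 (pq > 1, η > 0, N > 0), and assuming 1/s₁' > 1/s₂' > 0, 1/s₁'' > 1/s₂'' > 0, there exists an index i₀ ≥ 2 such that p/s_{i₀}'' < 2/N or q/s_{i₀}' < 2/N. -/
import Mathlib


/-- The iteration must eventually beat the threshold `2/N`: there is `i₀ ≥ 2`
with `p/s_{i₀}'' < 2/N` or `q/s_{i₀}' < 2/N` (here `x i = 1/s_i'`, `y i = 1/s_i''`). -/
theorem stmt13 (p q N η : ℝ) (hp : 0 < p) (hq : 0 < q) (hpq : 1 < p * q)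
    (hN : 0 < N) (hη : 0 < η)
    (x y : ℕ → ℝ)
    (hx : ∀ i ≥ 2, x i = p * y (i - 1) - 2 / N + η)
    (hy : ∀ i ≥ 2, y i = q * x (i - 1) - 2 / N + η)
    (hx12 : x 1 > x 2) (hx2 : x 2 > 0)
    (hy12 : y 1 > y 2) (hy2 : y 2 > 0) :
    ∃ i₀ ≥ 2, p * y i₀ < 2 / N ∨ q * x i₀ < 2 / N := by
  by_contra hcon
  push_neg at hcon
  -- hcon : ∀ i ≥ 2, 2/N ≤ p * y i ∧ 2/N ≤ q * x i
  set a : ℕ → ℝ := fun k => x (k+1) - x (k+2) with ha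
  set b : ℕ → ℝ := fun k => y (k+1) - y (k+2) with hb
  have hxpos : ∀ k, 0 < x (k+3) := by
    intro k
    have h1 := (hcon (k+2) (by omega)).1
    have h2 := hx (k+3) (by omega)
    simp only [show k+3-1 = k+2 from rfl] at h2
    nlinarith
  have hstep : ∀ k, a (k+1) = p * b k ∧ b (k+1) = q * a k := by
    intro k
    have h1 := hx (k+2) (by omega)
    have h2 := hx (k+3) (by omega)
    have h3 := hy (k+2) (by omega)
    have h4 := hy (k+3) (by omega)
    simp only [show k+2-1 = k+1 from rfl, show k+3-1 = k+2 from rfl] at h1 h2 h3 h4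
    constructor
    · simp only [ha, hb]; rw [h1, h2]; ring
    · simp only [ha, hb]; rw [h3, h4]; ring
  have hpos : ∀ k, 0 < a k ∧ 0 < b k := by
    intro k
    induction k with
    | zero => exact ⟨by simpa [ha] using sub_pos.mpr hx12, by simpa [hb] using sub_pos.mpr hy12⟩
    | succ n ih =>
      obtain ⟨h1, h2⟩ := hstep n
      exact ⟨by rw [h1]; exact mul_pos hp ih.2, by rw [h2]; exact mul_pos hq ih.1⟩
  have hgeom : ∀ m, a (2*m) = (p*q)^m * a 0 := by
    intro m
    induction m with
    | zero => simp
    | succ n ih =>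
      have h1 := (hstep (2*n+1)).1
      have h2 := (hstep (2*n)).2
      have : a (2*(n+1)) = p * q * a (2*n) := by
        have e : 2*(n+1) = (2*n+1)+1 := by ring
        rw [e, h1, h2]; ring
      rw [this, ih]; ring
  have hmono : ∀ k, x (k+2) ≤ x 2 := by
    intro k
    induction k with
    | zero => exact le_refl _
    | succ n ih =>
      have := (hpos (n+1)).1
      have : x (n+3) ≤ x (n+2) := by simp only [ha] at this; linarith
      calc x (n+1+2) ≤ x (n+2) := this
        _ ≤ x 2 := ih
  -- a (2m+2) = x (2m+3) - x (2m+4) < x 2 since x (2m+3) ≤ x 2 and x (2m+4) > 0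
  have hbound : ∀ m, a (2*(m+1)) < x 2 := by
    intro m
    have h1 : x (2*m+3) ≤ x 2 := hmono (2*m+1)
    have h2 : 0 < x (2*m+4) := hxpos (2*m+1)
    have e : a (2*(m+1)) = x (2*m+3) - x (2*m+4) := by
      simp only [ha]; congr 1 <;> ring_nf
    rw [e]; linarith
  obtain ⟨n, hn⟩ := pow_unbounded_of_one_lt (x 2 / a 0) hpq
  have ha0 := (hpos 0).1
  have hlt : x 2 < (p*q)^n * a 0 := by
    rw [div_lt_iff₀ ha0] at hn; linarith
  have hle : (p*q)^n * a 0 ≤ (p*q)^(n+1) * a 0 := by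
    have : (p*q)^n ≤ (p*q)^(n+1) := pow_le_pow_right₀ (le_of_lt hpq) (by omega)
    nlinarith
  have := hbound n
  rw [hgeom (n+1)] at this
  linarith
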